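/- Let p ≥ 2 and let G be a 2p-regular (p+2)-star colourable graph. Then G contains no diamond (K_4 minus an edge) as a subgraph, and in particular G is K_4-free. -/

import Mathlib

set_option linter.unusedSectionVars false

def IsStarColoring {V : Type*} {α : Type*} (G : SimpleGraph V) (f : V → α) : Prop :=
  (∀ ⦃u v : V⦄, G.Adj u v → f u ≠ f v) ∧
  ∀ ⦃a b c d : V⦄, G.Adj a b → G.Adj b c → G.Adj c d →
    a ≠ c → a ≠ d → b ≠ d → ¬(f a = f c ∧ f b = f d)

namespace StarAux

open Finset

variable {V : Type*} [Fintype V] [DecidableEq V] {p : ℕ}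
variable {G : SimpleGraph V} {f : V → Fin (p + 2)}

noncomputable def nbF (G : SimpleGraph V) (v : V) : Finset V :=
  (Set.toFinite (G.neighborSet v)).toFinset

lemma mem_nbF {v u : V} : u ∈ nbF G v ↔ G.Adj v u := by
  simp [nbF]

noncomputable def cnt (G : SimpleGraph V) (f : V → Fin (p + 2)) (v : V) (c : Fin (p + 2)) : ℕ :=
  ((nbF G v).filter (fun u => f u = c)).card

lemma two_le_cnt {v w w' : V} (h : G.Adj v w) (h' : G.Adj v w') (hne : w ≠ w')
    (hc : f w = f w') : 2 ≤ cnt G f v (f w') :=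
  Finset.one_lt_card.2 ⟨w, mem_filter.2 ⟨mem_nbF.2 h, hc⟩, w',
    mem_filter.2 ⟨mem_nbF.2 h', rfl⟩, hne⟩

lemma of_two_le_cnt {v : V} {c : Fin (p + 2)} (h : 2 ≤ cnt G f v c) :
    ∃ w w', G.Adj v w ∧ G.Adj v w' ∧ f w = c ∧ f w' = c ∧ w ≠ w' := by
  obtain ⟨w, hw, w', hw', hne⟩ := Finset.one_lt_card.1 h
  obtain ⟨hw1, hw2⟩ := mem_filter.1 hw
  obtain ⟨hw1', hw2'⟩ := mem_filter.1 hw'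
  exact ⟨w, w', mem_nbF.1 hw1, mem_nbF.1 hw1', hw2, hw2', hne⟩

lemma cnt_own (hf : IsStarColoring G f) (v : V) : cnt G f v (f v) = 0 := by
  rw [cnt, Finset.card_eq_zero, Finset.filter_eq_empty_iff]
  intro u hu
  exact fun hc => hf.1 (mem_nbF.1 hu) (hc.symm)

/-- L1: two adjacent vertices cannot both be dominant over each other. -/
lemma not_both (hf : IsStarColoring G f) {u v : V} (huv : G.Adj u v)
    (h1 : 2 ≤ cnt G f u (f v)) (h2 : 2 ≤ cnt G f v (f u)) : False := by
  obtain ⟨v₁, v₂, ha1, ha2, hc1, hc2, hne⟩ := of_two_le_cnt h1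
  obtain ⟨u₁, u₂, hb1, hb2, hd1, hd2, hne'⟩ := of_two_le_cnt h2
  -- pick v' ≠ v adjacent to u with colour f v
  obtain ⟨v', hav', hcv', hvv'⟩ : ∃ v', G.Adj u v' ∧ f v' = f v ∧ v' ≠ v := by
    rcases eq_or_ne v₁ v with h | h
    · exact ⟨v₂, ha2, hc2, by rw [← h]; exact hne.symm⟩
    · exact ⟨v₁, ha1, hc1, h⟩
  obtain ⟨u', hau', hcu', huu'⟩ : ∃ u', G.Adj v u' ∧ f u' = f u ∧ u' ≠ u := by
    rcases eq_or_ne u₁ u with h | h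
    · exact ⟨u₂, hb2, hd2, by rw [← h]; exact hne'.symm⟩
    · exact ⟨u₁, hb1, hd1, h⟩
  have hfu : f u ≠ f v := hf.1 huv
  have hvu' : v' ≠ u' := fun h => hfu (by rw [← hcu', ← h, hcv'])
  exact hf.2 (G.adj_symm hav') huv hau' hvv' hvu' (Ne.symm huu')
    ⟨hcv', hcu'.symm⟩

/-- Pigeonhole: every vertex of a `2p`-regular graph has a repeated colour. -/
lemma exists_rep (hp : 2 ≤ p) (hreg : ∀ v : V, (G.neighborSet v).ncard = 2 * p)
    (hf : IsStarColoring G f) (v : V) : ∃ c, 2 ≤ cnt G f v c := by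
  by_contra h
  push_neg at h
  have hdeg : (nbF G v).card = 2 * p := by
    rw [nbF, ← Set.ncard_eq_toFinset_card]; exact hreg v
  have hfib : (nbF G v).card = ∑ c ∈ (univ.erase (f v)), cnt G f v c := by
    apply Finset.card_eq_sum_card_fiberwise
    intro u hu
    exact mem_erase.2 ⟨Ne.symm (hf.1 (mem_nbF.1 hu)), mem_univ _⟩
  have hle : ∑ c ∈ (univ.erase (f v)), cnt G f v c ≤ (univ.erase (f v)).card := by
    calc ∑ c ∈ (univ.erase (f v)), cnt G f v c ≤ ∑ _c ∈ (univ.erase (f v)), 1 :=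
          Finset.sum_le_sum (fun c _ => Nat.lt_succ_iff.1 (h c))
      _ = (univ.erase (f v)).card := by simp
  have hcard : (univ.erase (f v)).card = p + 1 := by
    rw [Finset.card_erase_of_mem (mem_univ _), card_univ, Fintype.card_fin]
    omega
  omega


/-- The out-set: neighbours `u` of `v` such that `v` is not dominant over `u`. -/
noncomputable def outF (G : SimpleGraph V) (f : V → Fin (p + 2)) (v : V) : Finset V :=
  (nbF G v).filter (fun u => cnt G f v (f u) ≤ 1)

/-- Generic bound: the out-set avoids the own colour and all repeated colours. -/
lemma outF_card_le (hf : IsStarColoring G f) (v : V) (s : Finset (Fin (p + 2)))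
    (hs : ∀ c ∈ s, 2 ≤ cnt G f v c) :
    (outF G f v).card + s.card ≤ p + 1 := by
  have hfvs : f v ∉ s := by
    intro h
    have := hs _ h
    rw [cnt_own hf] at this
    omega
  have hmaps : ∀ u ∈ outF G f v, f u ∈ univ \ insert (f v) s := by
    intro u hu
    obtain ⟨hunb, hcle⟩ := mem_filter.1 hu
    refine mem_sdiff.2 ⟨mem_univ _, ?_⟩
    intro h
    rcases mem_insert.1 h with h | h
    · exact hf.1 (mem_nbF.1 hunb) h.symm
    · have := hs _ h
      omega
  have hinj : Set.InjOn f (outF G f v) := by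
    intro u hu u' hu' he
    by_contra hne
    obtain ⟨hunb, hcle⟩ := mem_filter.1 hu
    obtain ⟨hunb', _⟩ := mem_filter.1 hu'
    have : 2 ≤ cnt G f v (f u) :=
      two_le_cnt (mem_nbF.1 hunb') (mem_nbF.1 hunb) (Ne.symm hne) he.symm
    omega
  have hcard := Finset.card_le_card_of_injOn f hmaps hinj
  have h1 : (univ \ insert (f v) s).card = Fintype.card (Fin (p+2)) - (insert (f v) s).card :=
    Finset.card_sdiff_of_subset (subset_univ _) |>.trans (by rw [card_univ])
  have h2 : (insert (f v) s).card = s.card + 1 := by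
    rw [Finset.card_insert_of_notMem hfvs]
  have h3 : (insert (f v) s).card ≤ p + 2 := by
    have := Finset.card_le_card (subset_univ (insert (f v) s))
    rwa [card_univ, Fintype.card_fin] at this
  rw [h1, h2, Fintype.card_fin] at hcard
  omega

/-- Directed adjacent pairs satisfying `Q`. -/
noncomputable def pairs (G : SimpleGraph V) (Q : V → V → Prop) [DecidableRel Q] :
    Finset (V × V) :=
  univ.filter (fun e => e.2 ∈ nbF G e.1 ∧ Q e.1 e.2)

lemma mem_pairs {Q : V → V → Prop} [DecidableRel Q] {e : V × V} :
    e ∈ pairs G Q ↔ G.Adj e.1 e.2 ∧ Q e.1 e.2 := by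
  simp [pairs, mem_nbF]

lemma pairs_card (Q : V → V → Prop) [DecidableRel Q] :
    (pairs G Q).card = ∑ v, ((nbF G v).filter (fun u => Q v u)).card := by
  rw [Finset.card_eq_sum_card_fiberwise (f := Prod.fst) (t := univ) (fun _ _ => mem_univ _)]
  refine Finset.sum_congr rfl (fun v _ => ?_)
  apply Finset.card_bij (fun e _ => e.2)
  · intro e he
    obtain ⟨hep, h1⟩ := mem_filter.1 he
    obtain ⟨hnb, hQ⟩ := mem_pairs.1 hep
    subst h1
    exact mem_filter.2 ⟨mem_nbF.2 hnb, hQ⟩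
  · intro e₁ h₁ e₂ h₂ he
    have h1 : e₁.1 = v := (mem_filter.1 h₁).2
    have h2 : e₂.1 = v := (mem_filter.1 h₂).2
    exact Prod.ext (h1.trans h2.symm) he
  · intro u hu
    obtain ⟨hnb, hQ⟩ := mem_filter.1 hu
    exact ⟨(v, u), mem_filter.2 ⟨mem_pairs.2 ⟨mem_nbF.1 hnb, hQ⟩, rfl⟩, rfl⟩


lemma main (hp : 2 ≤ p) (hreg : ∀ v : V, (G.neighborSet v).ncard = 2 * p)
    (hf : IsStarColoring G f) :
    (∀ v c c', 2 ≤ cnt G f v c → 2 ≤ cnt G f v c' → c = c') ∧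
    (∀ u v, G.Adj u v → 2 ≤ cnt G f u (f v) ∨ 2 ≤ cnt G f v (f u)) := by
  set n := Fintype.card V with hn
  have hdeg : ∀ v, (nbF G v).card = 2 * p := by
    intro v; rw [nbF, ← Set.ncard_eq_toFinset_card]; exact hreg v
  set TT := pairs G (fun _ _ => True) with hTTdef
  set SS := pairs G (fun v u => 2 ≤ cnt G f v (f u)) with hSSdef
  have hTT : TT.card = n * (2 * p) := by
    rw [hTTdef, pairs_card]
    simp [Finset.filter_true_of_mem, hdeg, Finset.sum_const, Finset.card_univ, smul_eq_mul, hn]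
  have hsub : SS ⊆ TT := by
    intro e he
    exact mem_pairs.2 ⟨(mem_pairs.1 he).1, trivial⟩
  have himsub : SS.image Prod.swap ⊆ TT := by
    intro e he
    obtain ⟨e₀, he₀, hsw⟩ := Finset.mem_image.1 he
    subst hsw
    exact mem_pairs.2 ⟨G.adj_symm (mem_pairs.1 he₀).1, trivial⟩
  have hdisj : Disjoint SS (SS.image Prod.swap) := by
    rw [Finset.disjoint_left]
    intro e he him
    obtain ⟨e₀, he₀, hsw⟩ := Finset.mem_image.1 him
    have he₀e : e₀ = Prod.swap e := by
      apply Prod.swap_injective; rw [hsw, Prod.swap_swap]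
    subst he₀e
    obtain ⟨h1, h2⟩ := mem_pairs.1 he
    obtain ⟨h1', h2'⟩ := mem_pairs.1 he₀
    exact not_both hf h1 h2 h2'
  have hcard_im : (SS.image Prod.swap).card = SS.card :=
    Finset.card_image_of_injective _ Prod.swap_injective
  have hunion_le : SS.card + SS.card ≤ TT.card := by
    have h := Finset.card_le_card (Finset.union_subset hsub himsub)
    rwa [Finset.card_union_of_disjoint hdisj, hcard_im] at h
  have hSle : SS.card ≤ n * p := by
    have h2 : n * (2 * p) = n * p + n * p := by ring
    omega
  have hsplit : ∀ v, (outF G f v).card +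
      ((nbF G v).filter (fun u => 2 ≤ cnt G f v (f u))).card = 2 * p := by
    intro v
    have h := Finset.card_filter_add_card_filter_not
      (s := nbF G v) (p := fun u => cnt G f v (f u) ≤ 1)
    have h2 : (nbF G v).filter (fun u => ¬ cnt G f v (f u) ≤ 1)
        = (nbF G v).filter (fun u => 2 ≤ cnt G f v (f u)) := by
      apply Finset.filter_congr
      intro u _
      constructor
      · omega
      · omega
    rw [h2, hdeg] at h
    exact h
  have hSS2 : SS.card = ∑ v, ((nbF G v).filter (fun u => 2 ≤ cnt G f v (f u))).card :=
    pairs_card _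
  have houtsum : (∑ v, (outF G f v).card) + SS.card = n * (2 * p) := by
    rw [hSS2, ← Finset.sum_add_distrib,
      Finset.sum_congr rfl (fun v _ => hsplit v)]
    simp [Finset.sum_const, Finset.card_univ, smul_eq_mul, hn]
  have houtle : ∀ v, (outF G f v).card ≤ p := by
    intro v
    obtain ⟨c, hc⟩ := exists_rep hp hreg hf v
    have h := outF_card_le hf v {c} (by intro d hd; rw [Finset.mem_singleton.1 hd]; exact hc)
    rw [Finset.card_singleton] at h
    omega
  have hsumout_le : ∑ v, (outF G f v).card ≤ n * p := by
    calc ∑ v, (outF G f v).card ≤ ∑ _v : V, p := Finset.sum_le_sum (fun v _ => houtle v)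
      _ = n * p := by simp [Finset.sum_const, Finset.card_univ, smul_eq_mul, hn]
  have houteq : ∀ v, (outF G f v).card = p := by
    by_contra h
    push_neg at h
    obtain ⟨v, hv⟩ := h
    have hlt : (outF G f v).card < p := lt_of_le_of_ne (houtle v) hv
    have hstrict : ∑ v, (outF G f v).card < n * p := by
      calc ∑ v, (outF G f v).card < ∑ _v : V, p :=
            Finset.sum_lt_sum (fun i _ => houtle i) ⟨v, mem_univ v, hlt⟩
        _ = n * p := by simp [Finset.sum_const, Finset.card_univ, smul_eq_mul, hn]
    have h2 : n * (2 * p) = n * p + n * p := by ring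
    omega
  have houtsum_eq : ∑ v, (outF G f v).card = n * p := by
    rw [Finset.sum_congr rfl (fun v _ => houteq v)]
    simp [Finset.sum_const, Finset.card_univ, smul_eq_mul, hn]
  have hSeq : SS.card = n * p := by
    have h2 : n * (2 * p) = n * p + n * p := by ring
    omega
  have hun : SS ∪ SS.image Prod.swap = TT := by
    apply Finset.eq_of_subset_of_card_le (Finset.union_subset hsub himsub)
    rw [Finset.card_union_of_disjoint hdisj, hcard_im, hSeq, hTT]
    have h2 : n * (2 * p) = n * p + n * p := by ring
    omega
  constructor
  · intro v c c' hc hc'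
    by_contra hne
    have h := outF_card_le hf v {c, c'} (by
      intro d hd
      rcases Finset.mem_insert.1 hd with h | h
      · rw [h]; exact hc
      · rw [Finset.mem_singleton.1 h]; exact hc')
    have hcc : ({c, c'} : Finset (Fin (p+2))).card = 2 := by
      rw [Finset.card_insert_of_notMem (by simpa using hne), Finset.card_singleton]
    rw [hcc, houteq v] at h
    omega
  · intro u v huv
    have hmem : (u, v) ∈ TT := mem_pairs.2 ⟨huv, trivial⟩
    rw [← hun] at hmem
    rcases Finset.mem_union.1 hmem with h | h
    · exact Or.inl (mem_pairs.1 h).2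
    · obtain ⟨e₀, he₀, hsw⟩ := Finset.mem_image.1 h
      have he₀e : e₀ = (v, u) := by
        apply Prod.swap_injective; rw [hsw]; rfl
      subst he₀e
      exact Or.inr (mem_pairs.1 he₀).2

end StarAux

theorem stmt10 {V : Type*} [Fintype V] (G : SimpleGraph V) (p : ℕ) (hp : 2 ≤ p)
    (hreg : ∀ v : V, (G.neighborSet v).ncard = 2 * p)
    (hcol : ∃ f : V → Fin (p + 2), IsStarColoring G f) :
    (¬ ∃ a b x y : V, a ≠ b ∧ G.Adj a x ∧ G.Adj a y ∧ G.Adj b x ∧ G.Adj b y ∧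
      G.Adj x y) ∧ G.CliqueFree 4 := by
  classical
  obtain ⟨f, hf⟩ := hcol
  obtain ⟨A, B⟩ := StarAux.main hp hreg hf
  have hdiam : ¬ ∃ a b x y : V, a ≠ b ∧ G.Adj a x ∧ G.Adj a y ∧ G.Adj b x ∧ G.Adj b y ∧
      G.Adj x y := by
    rintro ⟨a, b, x, y, hab, hax, hay, hbx, hby, hxy⟩
    rcases B x y hxy with hx2 | hy1
    · have hxa : ¬ 2 ≤ StarAux.cnt G f x (f a) :=
        fun h => hf.1 hay (A x (f y) (f a) hx2 h).symm
      have hxb : ¬ 2 ≤ StarAux.cnt G f x (f b) :=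
        fun h => hf.1 hby (A x (f y) (f b) hx2 h).symm
      have Ra : 2 ≤ StarAux.cnt G f a (f x) := (B a x hax).resolve_right hxa
      have Rb : 2 ≤ StarAux.cnt G f b (f x) := (B b x hbx).resolve_right hxb
      have Rya : 2 ≤ StarAux.cnt G f y (f a) :=
        (B a y hay).resolve_left (fun h => hf.1 hxy (A a (f x) (f y) Ra h))
      have Ryb : 2 ≤ StarAux.cnt G f y (f b) :=
        (B b y hby).resolve_left (fun h => hf.1 hxy (A b (f x) (f y) Rb h))
      have hfab : f a = f b := A y (f a) (f b) Rya Ryb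
      exact hxa (StarAux.two_le_cnt (G.adj_symm hbx) (G.adj_symm hax) hab.symm hfab.symm)
    · have hya : ¬ 2 ≤ StarAux.cnt G f y (f a) :=
        fun h => hf.1 hax (A y (f x) (f a) hy1 h).symm
      have hyb : ¬ 2 ≤ StarAux.cnt G f y (f b) :=
        fun h => hf.1 hbx (A y (f x) (f b) hy1 h).symm
      have Ra : 2 ≤ StarAux.cnt G f a (f y) := (B a y hay).resolve_right hya
      have Rb : 2 ≤ StarAux.cnt G f b (f y) := (B b y hby).resolve_right hyb
      have Rxa : 2 ≤ StarAux.cnt G f x (f a) :=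
        (B a x hax).resolve_left (fun h => hf.1 hxy (A a (f x) (f y) h Ra))
      have Rxb : 2 ≤ StarAux.cnt G f x (f b) :=
        (B b x hbx).resolve_left (fun h => hf.1 hxy (A b (f x) (f y) h Rb))
      have hfab : f a = f b := A x (f a) (f b) Rxa Rxb
      exact hya (StarAux.two_le_cnt (G.adj_symm hby) (G.adj_symm hay) hab.symm hfab.symm)
  refine ⟨hdiam, ?_⟩
  intro t ht
  have h4 : t.card = 4 := ht.card_eq
  obtain ⟨a, ha⟩ := Finset.card_pos.1 (by rw [h4]; norm_num)
  have h3 : (t.erase a).card = 3 := by rw [Finset.card_erase_of_mem ha, h4]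
  obtain ⟨x, y, z, hxy, hxz, hyz, hE⟩ := Finset.card_eq_three.1 h3
  have hx : x ∈ t.erase a := by rw [hE]; simp
  have hy : y ∈ t.erase a := by rw [hE]; simp
  have hz : z ∈ t.erase a := by rw [hE]; simp
  have hxt := Finset.mem_of_mem_erase hx
  have hyt := Finset.mem_of_mem_erase hy
  have hzt := Finset.mem_of_mem_erase hz
  have hxa := (Finset.mem_erase.1 hx).1
  have hya := (Finset.mem_erase.1 hy).1
  have hza := (Finset.mem_erase.1 hz).1
  have adj : ∀ u ∈ t, ∀ w ∈ t, u ≠ w → G.Adj u w := fun u hu w hw hne =>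
    ht.isClique (Finset.mem_coe.2 hu) (Finset.mem_coe.2 hw) hne
  exact hdiam ⟨a, x, y, z, hxa.symm,
    adj a ha y hyt hya.symm.symm.symm, adj a ha z hzt (Ne.symm hza),
    adj x hxt y hyt hxy, adj x hxt z hzt hxz, adj y hyt z hzt hyz⟩
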